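/- Let c > 0 and ε > 0 be reals with γ := c ε² / 2 > 1, let M̲ ≥ 2 be an integer, and let W : ℕ → ℕ assign to each M ≥ 1 an integer window size with W(M) ≥ c · max{log M̲, log M} (natural logarithm). Then the probability that the mass of the unobserved set is within ε of the rate of discovery simultaneously for all M satisfies P( π(U_M) − R_{M,W(M)} ≤ ε for all integers M ≥ 1 ) ≥ 1 − (γ/(γ−1)) · (M̲ − 1)^{−(γ−1)}. -/

import Mathlib

open MeasureTheory ProbabilityTheory Real


lemma exp_neg_le_quad {x : ℝ} (hx : 0 ≤ x) : Real.exp (-x) ≤ 1 - x + x ^ 2 / 2 := by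
  have h := Real.quadratic_le_exp_of_nonneg hx
  have hpos : (0:ℝ) < 1 + x + x ^ 2 / 2 := by positivity
  calc Real.exp (-x) = (Real.exp x)⁻¹ := Real.exp_neg x
    _ ≤ (1 + x + x ^ 2 / 2)⁻¹ := by
        apply inv_anti₀ hpos h
    _ ≤ 1 - x + x ^ 2 / 2 := by
        rw [inv_eq_one_div, div_le_iff₀ hpos]; nlinarith

lemma mgf_single_bound {p t : ℝ} (hp0 : 0 ≤ p) (hp1 : p ≤ 1) (ht : 0 ≤ t) :
    Real.exp (t * p) * (1 + (Real.exp (-t) - 1) * p) ≤ Real.exp (t ^ 2 / 2) := by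
  have h1 : 1 + (Real.exp (-t) - 1) * p ≤ Real.exp ((Real.exp (-t) - 1) * p) := by
    have := Real.add_one_le_exp ((Real.exp (-t) - 1) * p); linarith
  have h2 : Real.exp (t * p) * (1 + (Real.exp (-t) - 1) * p)
      ≤ Real.exp (t * p + (Real.exp (-t) - 1) * p) := by
    rw [Real.exp_add]
    exact mul_le_mul_of_nonneg_left h1 (Real.exp_pos _).le
  refine h2.trans ?_
  apply Real.exp_le_exp.mpr
  have h3 := exp_neg_le_quad ht
  nlinarith [sq_nonneg t, sq_nonneg (1 - p)]

lemma bernoulli_step {s x : ℝ} (hs : 0 < s) (hx : 2 ≤ x) :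
    x ^ (-(s+1)) * s ≤ (x - 1) ^ (-s) - x ^ (-s) := by
  have hx0 : (0:ℝ) < x := by linarith
  have hx1 : (0:ℝ) < x - 1 := by linarith
  have hA : (0:ℝ) < x ^ s := Real.rpow_pos_of_pos hx0 _
  have hB : (0:ℝ) < (x - 1) ^ s := Real.rpow_pos_of_pos hx1 _
  -- key claim
  have key : (1 + s / x) * (x - 1) ^ s ≤ x ^ s := by
    rcases le_total 1 s with h1 | h1
    · have hm1 : (-1:ℝ) ≤ 1/(x-1) := (by norm_num : (-1:ℝ) ≤ 0).trans (by positivity)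
      have hb : 1 + s * (1 / (x-1)) ≤ (1 + 1/(x-1)) ^ s :=
        one_add_mul_self_le_rpow_one_add hm1 h1
      have he : 1 + 1/(x-1) = x / (x-1) := by field_simp; ring
      rw [he, Real.div_rpow hx0.le hx1.le] at hb
      have h2 : 1 + s / x ≤ x ^ s / (x-1) ^ s := by
        refine le_trans ?_ hb
        have hd : s / x ≤ s * (1/(x-1)) := by
          rw [mul_one_div]
          apply div_le_div_of_nonneg_left hs.le hx1 (by linarith)
        linarith
      rw [le_div_iff₀ hB] at h2
      exact h2
    · have hb : (1 + -(1/x)) ^ s ≤ 1 + s * -(1/x) :=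
        rpow_one_add_le_one_add_mul_self (by
          have : 1/x ≤ 1 := by rw [div_le_one hx0]; linarith
          linarith) hs.le h1
      have he : 1 + -(1/x) = (x-1)/x := by field_simp; ring
      rw [he, Real.div_rpow hx1.le hx0.le] at hb
      have hr : 1 + s * -(1/x) = 1 - s/x := by ring
      rw [div_le_iff₀ hA, hr] at hb
      have h2 : (x-1)^s ≤ (1 - s/x) * x^s := hb
      calc (1 + s/x) * (x-1)^s ≤ (1 + s/x) * ((1 - s/x) * x^s) := by
            apply mul_le_mul_of_nonneg_left h2 (by positivity)
        _ = (1 - (s/x)^2) * x^s := by ring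
        _ ≤ x^s := by nlinarith [sq_nonneg (s/x)]
  -- conclude
  rw [Real.rpow_neg hx0.le, Real.rpow_neg hx1.le, Real.rpow_neg hx0.le,
    Real.rpow_add_one hx0.ne' s]
  rw [inv_eq_one_div, inv_eq_one_div, inv_eq_one_div, div_sub_div _ _ hB.ne' hA.ne',
    div_mul_eq_mul_div, div_le_div_iff₀ (by positivity) (by positivity)]
  have hk : x^s - (x-1)^s ≥ (s/x) * (x-1)^s := by nlinarith
  rw [ge_iff_le, div_mul_eq_mul_div, div_le_iff₀ hx0] at hk
  nlinarith [mul_le_mul_of_nonneg_right hk hA.le, mul_pos hA hB]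

lemma chernoff_discovery
    {Ω : Type*} [MeasurableSpace Ω] {P : Measure Ω} [IsProbabilityMeasure P]
    {B : Type*} [Fintype B] [DecidableEq B]
    [MeasurableSpace B] [MeasurableSingletonClass B]
    {μ : Measure B} [IsProbabilityMeasure μ]
    {ω : ℕ → Ω → B} (hmeas : ∀ i, Measurable (ω i))
    (hindep : iIndepFun ω P)
    (hdist : ∀ i, Measure.map (ω i) P = μ)
    (S : Finset B) {ε : ℝ} (hε : 0 < ε) (M n : ℕ) (hn : 1 ≤ n) :
    P {x | ε < (μ (↑S : Set B)ᶜ).toReal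
        - (1/(n:ℝ)) * ∑ i ∈ Finset.Icc 1 n, (if ω (M+i) x ∈ S then (0:ℝ) else 1)}
      ≤ ENNReal.ofReal (Real.exp (-(ε^2 * n) / 2)) := by
  set p : ℝ := (μ (↑S : Set B)ᶜ).toReal with hp
  have hp0 : 0 ≤ p := ENNReal.toReal_nonneg
  have hp1 : p ≤ 1 := by
    have h := prob_le_one (μ := μ) (s := (↑S : Set B)ᶜ)
    simpa using ENNReal.toReal_mono (by norm_num) h
  set g : B → ℝ := fun b => p - (if b ∈ S then 0 else 1) with hg
  have hgmeas : Measurable g := .of_discrete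
  set Z : ℕ → Ω → ℝ := fun j x => g (ω j x) with hZ
  have hZmeas : ∀ j, Measurable (Z j) := fun j => hgmeas.comp (hmeas j)
  have hZindep : iIndepFun Z P :=
    hindep.comp (fun _ => g) (fun _ => hgmeas)
  set T : Finset ℕ := Finset.Icc (M+1) (M+n) with hT
  have hTcard : T.card = n := by simp [hT]
  have hn0 : (0:ℝ) < n := by exact_mod_cast hn
  -- event inclusion
  have hsub : {x | ε < p
        - (1/(n:ℝ)) * ∑ i ∈ Finset.Icc 1 n, (if ω (M+i) x ∈ S then (0:ℝ) else 1)}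
      ⊆ {x | (n:ℝ) * ε ≤ (∑ j ∈ T, Z j) x} := by
    intro x hx
    simp only [Set.mem_setOf_eq] at hx ⊢
    have hre : ∑ i ∈ Finset.Icc 1 n, (if ω (M+i) x ∈ S then (0:ℝ) else 1)
        = ∑ j ∈ T, (if ω j x ∈ S then (0:ℝ) else 1) := by
      rw [hT, ← Finset.map_add_left_Icc, Finset.sum_map]
      rfl
    have hXx : (∑ j ∈ T, Z j) x = (n:ℝ) * p
        - ∑ j ∈ T, (if ω j x ∈ S then (0:ℝ) else 1) := by
      simp only [Finset.sum_apply, hZ, hg, Finset.sum_sub_distrib, Finset.sum_const, hTcard,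
        nsmul_eq_mul]
    rw [hXx, ← hre]
    have h2 : (1/(n:ℝ)) * ∑ i ∈ Finset.Icc 1 n, (if ω (M+i) x ∈ S then (0:ℝ) else 1)
        < p - ε := by linarith
    rw [one_div, inv_mul_lt_iff₀ hn0] at h2
    nlinarith
  -- integrability
  have hint : ∀ j, Integrable (fun x => Real.exp (ε * Z j x)) P := by
    intro j
    have h1 : Integrable (fun b => Real.exp (ε * g b)) μ := .of_finite
    have h2 := integrable_map_measure (μ := P) (f := ω j) (g := fun b => Real.exp (ε * g b))
      (Measurable.of_discrete (f := fun b => Real.exp (ε * g b))).aestronglyMeasurable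
      (hmeas j).aemeasurable
    rw [hdist j] at h2
    exact h2.mp h1
  have hintsum : Integrable (fun x => Real.exp (ε * (∑ j ∈ T, Z j) x)) P :=
    hZindep.integrable_exp_mul_sum hZmeas (fun j _ => hint j)
  -- Chernoff
  have hch := measure_ge_le_exp_mul_mgf (μ := P) (X := ∑ j ∈ T, Z j) ((n:ℝ) * ε) hε.le hintsum
  -- compute mgf of each summand
  have hmgf : ∀ j, mgf (Z j) P ε = Real.exp (ε * p) * (1 + (Real.exp (-ε) - 1) * p) := by
    intro j
    have hae : AEStronglyMeasurable (fun b => Real.exp (ε * g b)) (Measure.map (ω j) P) :=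
      (Measurable.of_discrete (f := fun b => Real.exp (ε * g b))).aestronglyMeasurable
    have h1 : mgf (Z j) P ε = ∫ b, Real.exp (ε * g b) ∂μ := by
      rw [mgf, ← hdist j, integral_map (hmeas j).aemeasurable hae]
    rw [h1]
    have hpt : ∀ b, Real.exp (ε * g b)
        = Real.exp (ε * p) * (1 + (Real.exp (-ε) - 1) *
            Set.indicator (↑S : Set B)ᶜ (fun _ => (1:ℝ)) b) := by
      intro b
      by_cases hb : b ∈ S
      · simp [hg, hb, Set.indicator_apply]
      · simp only [hg, hb, if_false, Set.indicator_apply, Set.mem_compl_iff,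
          Finset.mem_coe, not_false_iff, if_true, mul_one]
        have he : ε * (p - 1) = ε * p + (-ε) := by ring
        rw [he, Real.exp_add]
        ring
    rw [integral_congr_ae (Filter.Eventually.of_forall hpt), integral_const_mul]
    have hind : ∫ b, Set.indicator (↑S : Set B)ᶜ (fun _ => (1:ℝ)) b ∂μ = p := by
      rw [integral_indicator_const (1:ℝ) (MeasurableSet.of_discrete (s := (↑S : Set B)ᶜ))]
      simp [hp]
      rfl
    have hadd : ∫ b, (1 + (Real.exp (-ε) - 1) *
        Set.indicator (↑S : Set B)ᶜ (fun _ => (1:ℝ)) b) ∂μ = 1 + (Real.exp (-ε) - 1) * p := by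
      rw [integral_add (integrable_const _) (Integrable.of_finite.const_mul _),
        integral_const, integral_const_mul, hind]
      simp
    rw [hadd]
  -- product bound
  have hprod : mgf (∑ j ∈ T, Z j) P ε ≤ Real.exp (ε^2/2) ^ n := by
    rw [hZindep.mgf_sum hZmeas T]
    calc ∏ j ∈ T, mgf (Z j) P ε ≤ ∏ j ∈ T, Real.exp (ε^2/2) :=
          Finset.prod_le_prod (fun j _ => mgf_nonneg)
            (fun j _ => by rw [hmgf j]; exact mgf_single_bound hp0 hp1 hε.le)
      _ = Real.exp (ε^2/2) ^ n := by rw [Finset.prod_const, hTcard]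
  calc P {x | ε < p
        - (1/(n:ℝ)) * ∑ i ∈ Finset.Icc 1 n, (if ω (M+i) x ∈ S then (0:ℝ) else 1)}
      ≤ P {x | (n:ℝ) * ε ≤ (∑ j ∈ T, Z j) x} := measure_mono hsub
    _ = ENNReal.ofReal ((P {x | (n:ℝ) * ε ≤ (∑ j ∈ T, Z j) x}).toReal) :=
        (ENNReal.ofReal_toReal (measure_ne_top _ _)).symm
    _ ≤ ENNReal.ofReal (Real.exp (-(ε^2 * n) / 2)) := by
        apply ENNReal.ofReal_le_ofReal
        refine hch.trans ?_
        calc Real.exp (-ε * ((n:ℝ) * ε)) * mgf (∑ j ∈ T, Z j) P ε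
            ≤ Real.exp (-ε * ((n:ℝ) * ε)) * Real.exp (ε^2/2) ^ n :=
              mul_le_mul_of_nonneg_left hprod (Real.exp_pos _).le
          _ = Real.exp (-(ε^2 * n) / 2) := by
              rw [← Real.exp_nat_mul, ← Real.exp_add]
              congr 1
              ring

lemma badM_bound
    {Ω : Type*} [MeasurableSpace Ω] {P : Measure Ω} [IsProbabilityMeasure P]
    {B : Type*} [Fintype B] [DecidableEq B]
    [MeasurableSpace B] [MeasurableSingletonClass B]
    {μ : Measure B} [IsProbabilityMeasure μ]
    {ω : ℕ → Ω → B} (hmeas : ∀ i, Measurable (ω i))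
    (hindep : iIndepFun ω P)
    (hdist : ∀ i, Measure.map (ω i) P = μ)
    {ε : ℝ} (hε : 0 < ε) (M n : ℕ) (hM : 1 ≤ M) (hn : 1 ≤ n) :
    MeasurableSet {x | ε < (μ {b | ∀ i ∈ Finset.Icc 1 M, ω i x ≠ b}).toReal
        - (1/(n:ℝ)) * ∑ i ∈ Finset.Icc 1 n,
            (if ∀ j ∈ Finset.Icc (1 : ℕ) M, ω j x ≠ ω (M + i) x then (1:ℝ) else 0)}
      ∧ P {x | ε < (μ {b | ∀ i ∈ Finset.Icc 1 M, ω i x ≠ b}).toReal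
        - (1/(n:ℝ)) * ∑ i ∈ Finset.Icc 1 n,
            (if ∀ j ∈ Finset.Icc (1 : ℕ) M, ω j x ≠ ω (M + i) x then (1:ℝ) else 0)}
      ≤ ENNReal.ofReal (Real.exp (-(ε^2 * n) / 2)) := by
  classical
  set Obs : Ω → Finset B := fun x => (Finset.Icc 1 M).image (fun j => ω j x) with hObs
  have pw1 : ∀ x, {b | ∀ i ∈ Finset.Icc 1 M, ω i x ≠ b} = (↑(Obs x) : Set B)ᶜ := by
    intro x; ext b
    simp [hObs, eq_comm]
  have pw2 : ∀ x i, (if ∀ j ∈ Finset.Icc (1 : ℕ) M, ω j x ≠ ω (M + i) x then (1:ℝ) else 0)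
      = (if ω (M+i) x ∈ Obs x then (0:ℝ) else 1) := by
    intro x i
    by_cases h : ω (M+i) x ∈ Obs x
    · rw [if_pos h, if_neg]
      simp only [hObs, Finset.mem_image, Finset.mem_Icc] at h
      obtain ⟨j, hj, hje⟩ := h
      push_neg
      exact ⟨j, by simpa using hj, hje⟩
    · rw [if_neg h, if_pos]
      intro j hj hje
      exact h (Finset.mem_image.mpr ⟨j, hj, hje⟩)
  -- the events
  set A : Finset B → Set Ω := fun S => {x | Obs x = S} with hA
  set C : Finset B → Set Ω := fun S => {x | ε < (μ (↑S : Set B)ᶜ).toReal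
      - (1/(n:ℝ)) * ∑ i ∈ Finset.Icc 1 n, (if ω (M+i) x ∈ S then (0:ℝ) else 1)} with hC
  have hEeq : {x | ε < (μ {b | ∀ i ∈ Finset.Icc 1 M, ω i x ≠ b}).toReal
        - (1/(n:ℝ)) * ∑ i ∈ Finset.Icc 1 n,
            (if ∀ j ∈ Finset.Icc (1 : ℕ) M, ω j x ≠ ω (M + i) x then (1:ℝ) else 0)}
      = ⋃ S ∈ (Finset.univ : Finset (Finset B)), A S ∩ C S := by
    ext x
    simp only [Set.mem_setOf_eq, Set.mem_iUnion, Finset.mem_univ, exists_true_left,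
      Set.mem_inter_iff, hA, hC, exists_prop, true_and]
    constructor
    · intro hx
      refine ⟨Obs x, rfl, ?_⟩
      rw [← pw1 x]
      calc ε < _ := hx
      _ = _ := by rw [Finset.sum_congr rfl (fun i _ => pw2 x i)]
    · rintro ⟨S, hS, hxC⟩
      subst hS
      rw [pw1 x, Finset.sum_congr rfl (fun i _ => pw2 x i)]
      exact hxC
  rw [hEeq]
  -- independence: A S depends on coordinates in Icc 1 M, C S on Icc (M+1) (M+n)
  set I1 : Finset ℕ := Finset.Icc 1 M with hI1
  set I2 : Finset ℕ := Finset.Icc (M+1) (M+n) with hI2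
  have hdisj : Disjoint I1 I2 := by
    rw [hI1, hI2, Finset.disjoint_left]
    intro a ha1 ha2
    simp only [Finset.mem_Icc] at ha1 ha2
    omega
  have hI := hindep.indepFun_finset I1 I2 hdisj hmeas
  set V1 : Ω → (↑I1 → B) := fun x i => ω ↑i x with hV1
  set V2 : Ω → (↑I2 → B) := fun x i => ω ↑i x with hV2
  have hV1meas : Measurable V1 := measurable_pi_lambda _ (fun i => hmeas ↑i)
  have hV2meas : Measurable V2 := measurable_pi_lambda _ (fun i => hmeas ↑i)
  have hACsets : ∀ S : Finset B, ∃ (GA : Set (↑I1 → B)) (GC : Set (↑I2 → B)),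
      A S = V1 ⁻¹' GA ∧ C S = V2 ⁻¹' GC := by
    intro S
    set GA : Set (↑I1 → B) := {v | Finset.image (fun i => v i) Finset.univ = S} with hGA
    set GC : Set (↑I2 → B) := {v | ε < (μ (↑S : Set B)ᶜ).toReal
        - (1/(n:ℝ)) * ∑ i : ↑I2, (if v i ∈ S then (0:ℝ) else 1)} with hGC
    refine ⟨GA, GC, ?_, ?_⟩
    · show A S = V1 ⁻¹' GA
      ext x
      simp only [hA, Set.mem_setOf_eq, Set.mem_preimage, hGA, hV1]
      constructor
      · intro h; rw [← h]; ext b; simp [hObs, Finset.mem_image, Subtype.exists, hI1]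
      · intro h; rw [← h]; ext b; simp [hObs, Finset.mem_image, Subtype.exists, hI1]
    · show C S = V2 ⁻¹' GC
      ext x
      simp only [hC, Set.mem_setOf_eq, Set.mem_preimage, hGC, hV2]
      have : ∑ i : ↑I2, (if ω ↑i x ∈ S then (0:ℝ) else 1)
          = ∑ i ∈ Finset.Icc 1 n, (if ω (M+i) x ∈ S then (0:ℝ) else 1) := by
        rw [Finset.sum_coe_sort I2 (fun j => if ω j x ∈ S then (0:ℝ) else 1)]
        rw [hI2, ← Finset.map_add_left_Icc, Finset.sum_map]
        rfl
      rw [this]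
  have hACmeas : ∀ S : Finset B, MeasurableSet (A S) ∧ MeasurableSet (C S) := by
    intro S
    obtain ⟨GA, GC, hA', hC'⟩ := hACsets S
    rw [hA', hC']
    exact ⟨hV1meas .of_discrete, hV2meas .of_discrete⟩
  have hmul : ∀ S : Finset B, P (A S ∩ C S) = P (A S) * P (C S) := by
    intro S
    obtain ⟨GA, GC, hA', hC'⟩ := hACsets S
    rw [hA', hC']
    exact hI.measure_inter_preimage_eq_mul GA GC .of_discrete .of_discrete
  constructor
  · exact Finset.measurableSet_biUnion _ (fun S _ => ((hACmeas S).1).inter (hACmeas S).2)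
  calc P (⋃ S ∈ (Finset.univ : Finset (Finset B)), A S ∩ C S)
      ≤ ∑ S ∈ (Finset.univ : Finset (Finset B)), P (A S ∩ C S) :=
        measure_biUnion_finset_le _ _
    _ ≤ ∑ S ∈ (Finset.univ : Finset (Finset B)),
          P (A S) * ENNReal.ofReal (Real.exp (-(ε^2 * n) / 2)) := by
        apply Finset.sum_le_sum
        intro S _
        rw [hmul S]
        exact mul_le_mul_right (chernoff_discovery hmeas hindep hdist S hε M n hn) _
    _ = (∑ S ∈ (Finset.univ : Finset (Finset B)), P (A S))
          * ENNReal.ofReal (Real.exp (-(ε^2 * n) / 2)) := by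
        rw [Finset.sum_mul]
    _ ≤ ENNReal.ofReal (Real.exp (-(ε^2 * n) / 2)) := by
        have hsum : ∑ S ∈ (Finset.univ : Finset (Finset B)), P (A S) = 1 := by
          rw [← measure_biUnion_finset ?_ ?_]
          · rw [show ⋃ S ∈ (Finset.univ : Finset (Finset B)), A S = Set.univ from ?_]
            · exact measure_univ
            · ext x; simp only [Set.mem_iUnion, Set.mem_univ, iff_true, Finset.mem_univ,
                exists_true_left, hA, Set.mem_setOf_eq, exists_prop, true_and]
              exact ⟨Obs x, rfl⟩
          · intro S _ S' _ hne
            apply Set.disjoint_left.mpr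
            intro x hx hx'
            exact hne (hx ▸ hx')
          · intro S _
            have hA' : A S = (fun x (i : ↑I1) => ω ↑i x) ⁻¹'
                {v : ↑I1 → B | Finset.image (fun i => v i) Finset.univ = S} := by
              ext x
              simp only [hA, Set.mem_setOf_eq, Set.mem_preimage]
              constructor
              · intro h; rw [← h]; ext b; simp [hObs, Finset.mem_image, Subtype.exists, hI1]
              · intro h; rw [← h]; ext b; simp [hObs, Finset.mem_image, Subtype.exists, hI1]
            rw [hA']
            exact (measurable_pi_lambda (fun x (i : ↑I1) => ω ↑i x)
              (fun i => hmeas ↑i)) .of_discrete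
        rw [hsum, one_mul]

lemma series_bound {γ : ℝ} (hγ : 1 < γ) {Mlow : ℕ} (hMlow : 2 ≤ Mlow) :
    (∑' M : ℕ, ENNReal.ofReal (if 1 ≤ M then (max (Mlow:ℝ) (M:ℝ)) ^ (-γ) else 0))
      ≤ ENNReal.ofReal ((γ/(γ-1)) * ((Mlow:ℝ) - 1) ^ (-(γ-1))) := by
  set s : ℝ := γ - 1 with hsdef
  have hs : 0 < s := by simp [hsdef]; linarith
  set K : ℝ := (Mlow:ℝ) - 1 with hK
  have hK1 : 1 ≤ K := by
    have : (2:ℝ) ≤ (Mlow:ℝ) := by exact_mod_cast hMlow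
    simp [hK]; linarith
  have hK0 : 0 < K := by linarith
  set rr : ℕ → ℝ := fun M => if 1 ≤ M then (max (Mlow:ℝ) (M:ℝ)) ^ (-γ) else 0 with hrr
  have hrr0 : ∀ M, 0 ≤ rr M := by
    intro M; rw [hrr]
    dsimp only
    split
    · positivity
    · exact le_refl 0
  apply ENNReal.tsum_le_of_sum_range_le
  intro N
  rw [← ENNReal.ofReal_sum_of_nonneg (fun M _ => hrr0 M)]
  apply ENNReal.ofReal_le_ofReal
  -- real-number goal
  -- first: the sum is monotone in N, so assume Mlow ≤ N
  suffices H : ∀ N', Mlow ≤ N' → ∑ M ∈ Finset.range N', rr M ≤ γ/s * K ^ (-s) by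
    calc ∑ M ∈ Finset.range N, rr M ≤ ∑ M ∈ Finset.range (max N Mlow), rr M := by
          apply Finset.sum_le_sum_of_subset_of_nonneg
          · exact Finset.range_subset_range.mpr (le_max_left _ _)
          · intro i _ _; exact hrr0 i
      _ ≤ γ/s * K ^ (-s) := H _ (le_max_right _ _)
  intro N hN
  rw [Finset.range_eq_Ico, ← Finset.sum_Ico_consecutive _ (Nat.zero_le Mlow) hN,
    ← Finset.sum_Ico_consecutive _ (Nat.zero_le 1) (by omega : 1 ≤ Mlow)]
  have part0 : ∑ M ∈ Finset.Ico 0 1, rr M = 0 := by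
    simp [hrr]
  have part1 : ∑ M ∈ Finset.Ico 1 Mlow, rr M ≤ K ^ (-s) := by
    have hterm : ∀ M ∈ Finset.Ico 1 Mlow, rr M ≤ K ^ (-γ) := by
      intro M hM
      rw [Finset.mem_Ico] at hM
      rw [hrr]
      dsimp only
      rw [if_pos hM.1]
      have hmax : max (Mlow:ℝ) (M:ℝ) = (Mlow:ℝ) := by
        apply max_eq_left
        exact_mod_cast hM.2.le
      rw [hmax]
      apply Real.rpow_le_rpow_of_nonpos hK0 (by rw [hK]; linarith) (by linarith)
    calc ∑ M ∈ Finset.Ico 1 Mlow, rr M ≤ (Finset.Ico 1 Mlow).card • K ^ (-γ) :=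
          Finset.sum_le_card_nsmul _ _ _ hterm
      _ = ((Mlow - 1 : ℕ) : ℝ) * K ^ (-γ) := by
          rw [Nat.card_Ico, nsmul_eq_mul]
      _ = K * K ^ (-γ) := by
          congr 1
          rw [hK]
          push_cast [Nat.cast_sub (by omega : 1 ≤ Mlow)]
          ring
      _ = K ^ (-s) := by
          rw [show (-s) = 1 + (-γ) by rw [hsdef]; ring,
            Real.rpow_one_add' hK0.le (by intro h; linarith : (1:ℝ) + -γ ≠ 0)]
  have part2 : ∑ M ∈ Finset.Ico Mlow N, rr M ≤ (1/s) * K ^ (-s) := by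
    have hterm : ∀ M ∈ Finset.Ico Mlow N, rr M
        ≤ (1/s) * ((((M - 1 : ℕ)):ℝ) ^ (-s) - ((M:ℕ):ℝ) ^ (-s)) := by
      intro M hM
      rw [Finset.mem_Ico] at hM
      have hM2 : 2 ≤ M := le_trans hMlow hM.1
      have hx2 : (2:ℝ) ≤ (M:ℝ) := by exact_mod_cast hM2
      have hmax : max (Mlow:ℝ) (M:ℝ) = (M:ℝ) := by
        apply max_eq_right
        exact_mod_cast hM.1
      rw [hrr]
      dsimp only
      rw [if_pos (by omega : 1 ≤ M), hmax]
      have hb := bernoulli_step hs hx2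
      have hcast : ((M:ℝ) - 1) = (((M - 1 : ℕ)):ℝ) := by
        push_cast [Nat.cast_sub (by omega : 1 ≤ M)]; ring
      rw [hcast] at hb
      have hγs : -γ = -(s+1) := by rw [hsdef]; ring
      rw [hγs]
      calc ((M:ℕ):ℝ) ^ (-(s+1)) ≤ ((((M - 1 : ℕ)):ℝ) ^ (-s) - ((M:ℕ):ℝ) ^ (-s)) / s :=
            (le_div_iff₀ hs).mpr hb
        _ = (1/s) * ((((M - 1 : ℕ)):ℝ) ^ (-s) - ((M:ℕ):ℝ) ^ (-s)) := by ring
    calc ∑ M ∈ Finset.Ico Mlow N, rr M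
        ≤ ∑ M ∈ Finset.Ico Mlow N, (1/s) * ((((M - 1 : ℕ)):ℝ) ^ (-s) - ((M:ℕ):ℝ) ^ (-s)) :=
          Finset.sum_le_sum hterm
      _ = (1/s) * ∑ M ∈ Finset.Ico Mlow N, ((((M - 1 : ℕ)):ℝ) ^ (-s) - ((M:ℕ):ℝ) ^ (-s)) := by
          rw [Finset.mul_sum]
      _ ≤ (1/s) * K ^ (-s) := by
          apply mul_le_mul_of_nonneg_left _ (by positivity)
          rw [Finset.sum_Ico_eq_sum_range]
          have heq : ∀ i, ((((Mlow + i - 1 : ℕ)):ℝ) ^ (-s) - ((Mlow + i:ℕ):ℝ) ^ (-s))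
              = (fun k => (((Mlow - 1 + k : ℕ)):ℝ) ^ (-s)) i
                - (fun k => (((Mlow - 1 + k : ℕ)):ℝ) ^ (-s)) (i+1) := by
            intro i
            have e1 : Mlow + i - 1 = Mlow - 1 + i := by omega
            have e2 : Mlow + i = Mlow - 1 + (i + 1) := by omega
            rw [e1, e2]
          rw [Finset.sum_congr rfl (fun i _ => heq i), Finset.sum_range_sub']
          have : (0:ℝ) ≤ (((Mlow - 1 + (N - Mlow) : ℕ)):ℝ) ^ (-s) := by positivity
          have hc : (((Mlow - 1 + 0 : ℕ)):ℝ) = K := by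
            rw [hK]; push_cast [Nat.cast_sub (by omega : 1 ≤ Mlow)]; ring
          rw [hc]
          linarith
  have hfinal : K ^ (-s) + (1/s) * K ^ (-s) = γ/s * K ^ (-s) := by
    have : γ = s + 1 := by rw [hsdef]; ring
    rw [this]
    field_simp
  linarith [part0, part1, part2]

/-- With window sizes `W M ≥ c · max (log M̲) (log M)` and `γ = c ε²/2 > 1`,
the undiscovered mass is within `ε` of the rate of discovery simultaneously for all `M ≥ 1`
with probability at least `1 - (γ/(γ-1)) (M̲-1)^(-(γ-1))`. -/
theorem discovery_rate_uniform_bound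
    {Ω : Type*} [MeasurableSpace Ω] (P : Measure Ω) [IsProbabilityMeasure P]
    {B : Type*} [Fintype B] [Nonempty B] [DecidableEq B]
    [MeasurableSpace B] [MeasurableSingletonClass B]
    (μ : Measure B) [IsProbabilityMeasure μ]
    (ω : ℕ → Ω → B)
    (hmeas : ∀ i, Measurable (ω i))
    (hindep : iIndepFun ω P)
    (hdist : ∀ i, Measure.map (ω i) P = μ)
    (c ε γ : ℝ) (hc : 0 < c) (hε : 0 < ε)
    (hγdef : γ = c * ε ^ 2 / 2) (hγ : 1 < γ)
    (Mlow : ℕ) (hMlow : 2 ≤ Mlow)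
    (W : ℕ → ℕ)
    (hW : ∀ M : ℕ, 1 ≤ M → c * max (Real.log Mlow) (Real.log M) ≤ (W M : ℝ)) :
    1 - ENNReal.ofReal ((γ / (γ - 1)) * ((Mlow : ℝ) - 1) ^ (-(γ - 1)))
      ≤ P {x | ∀ M : ℕ, 1 ≤ M →
            (μ {b | ∀ i ∈ Finset.Icc 1 M, ω i x ≠ b}).toReal
              - (1 / (W M : ℝ)) * ∑ i ∈ Finset.Icc 1 (W M),
                  (if ∀ j ∈ Finset.Icc (1 : ℕ) M, ω j x ≠ ω (M + i) x then (1 : ℝ) else 0)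
              ≤ ε} := by
  classical
  have hMlowR : (2:ℝ) ≤ (Mlow:ℝ) := by exact_mod_cast hMlow
  have hlogMlow : 0 < Real.log Mlow := Real.log_pos (by linarith)
  have hW1 : ∀ M, 1 ≤ M → 1 ≤ W M := by
    intro M hM
    have h := hW M hM
    have h2 : (0:ℝ) < (W M : ℝ) :=
      lt_of_lt_of_le (mul_pos hc (lt_of_lt_of_le hlogMlow (le_max_left _ _))) h
    have h0 : 0 < W M := by exact_mod_cast h2
    omega
  set Q : ℕ → Set Ω := fun M => {x | ε <
      (μ {b | ∀ i ∈ Finset.Icc 1 M, ω i x ≠ b}).toReal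
        - (1/((W M : ℕ):ℝ)) * ∑ i ∈ Finset.Icc 1 (W M),
            (if ∀ j ∈ Finset.Icc (1 : ℕ) M, ω j x ≠ ω (M + i) x then (1:ℝ) else 0)} with hQdef
  have hbad : ∀ M, 1 ≤ M → MeasurableSet (Q M)
      ∧ P (Q M) ≤ ENNReal.ofReal (Real.exp (-(ε^2 * (W M)) / 2)) :=
    fun M hM => badM_bound hmeas hindep hdist hε M (W M) hM (hW1 M hM)
  set D : ℕ → Set Ω := fun M => if 1 ≤ M then Q M else ∅ with hD
  have hDmeas : ∀ M, MeasurableSet (D M) := by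
    intro M
    rw [hD]; dsimp only
    split_ifs with h
    · exact (hbad M h).1
    · exact MeasurableSet.empty
  have hGeq : {x | ∀ M : ℕ, 1 ≤ M →
      (μ {b | ∀ i ∈ Finset.Icc 1 M, ω i x ≠ b}).toReal
        - (1 / (W M : ℝ)) * ∑ i ∈ Finset.Icc 1 (W M),
            (if ∀ j ∈ Finset.Icc (1 : ℕ) M, ω j x ≠ ω (M + i) x then (1 : ℝ) else 0)
        ≤ ε} = (⋃ M, D M)ᶜ := by
    ext x
    simp only [Set.mem_compl_iff, Set.mem_iUnion, not_exists, Set.mem_setOf_eq, hD, hQdef]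
    constructor
    · intro h M
      split_ifs with hM
      · rw [Set.mem_setOf_eq, not_lt]
        exact h M hM
      · exact Set.notMem_empty x
    · intro h M hM
      have h2 := h M
      rw [if_pos hM, Set.mem_setOf_eq, not_lt] at h2
      exact h2
  rw [hGeq, measure_compl (MeasurableSet.iUnion hDmeas) (measure_ne_top P _), measure_univ]
  refine tsub_le_tsub_left ?_ 1
  calc P (⋃ M, D M) ≤ ∑' M, P (D M) := measure_iUnion_le D
    _ ≤ ∑' M : ℕ, ENNReal.ofReal (if 1 ≤ M then (max (Mlow:ℝ) (M:ℝ)) ^ (-γ) else 0) := by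
        apply ENNReal.tsum_le_tsum
        intro M
        rw [hD]; dsimp only
        split_ifs with hM
        · refine (hbad M hM).2.trans (ENNReal.ofReal_le_ofReal ?_)
          have hM1R : (1:ℝ) ≤ (M:ℝ) := by exact_mod_cast hM
          set m : ℝ := max (Mlow:ℝ) (M:ℝ) with hm
          have hm0 : (0:ℝ) < m := lt_of_lt_of_le (by linarith) (le_max_left _ _)
          have hlog : Real.log m = max (Real.log Mlow) (Real.log M) := by
            rcases le_total (Mlow:ℝ) (M:ℝ) with h | h
            · rw [hm, max_eq_right h, max_eq_right (Real.log_le_log (by linarith) h)]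
            · rw [hm, max_eq_left h, max_eq_left (Real.log_le_log (by linarith) h)]
          have hWlog : c * Real.log m ≤ (W M : ℝ) := by rw [hlog]; exact hW M hM
          rw [Real.rpow_def_of_pos hm0]
          apply Real.exp_le_exp.mpr
          rw [hγdef]
          nlinarith [mul_le_mul_of_nonneg_left hWlog (by positivity : (0:ℝ) ≤ ε^2/2)]
        · simp
    _ ≤ ENNReal.ofReal ((γ / (γ - 1)) * ((Mlow : ℝ) - 1) ^ (-(γ - 1))) :=
        series_bound hγ hMlow
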